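/- Let G : ℝ^d → ℝ be a Schwartz function, 1 ≤ p ≤ ∞, and S ⊆ ℝ^d measurable with sup_{x∈ℝ^d} |S ∩ B_ℓ(x)| ≤ V. Then for any u₀ ∈ L^p(ℝ^d), the function II(x) = ∫ G(x−y)·𝟙_{B_ℓ}(x−y)·u₀(y)·𝟙_S(y) dy satisfies ‖II‖_{L^p} ≤ C_d ‖G‖_{L^∞} V^{1−1/p} ℓ^{d/p} ‖u₀‖_{L^p}, where C_d depends only on d. -/

import Mathlib

open MeasureTheory ENNReal

section Aux
open Metric Set

-- continuous pointwise bound by essSup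
lemma cont_le_essSup {E : Type*} [MeasurableSpace E] [TopologicalSpace E] [BorelSpace E]
    {μ : Measure E} [μ.IsOpenPosMeasure] {f : E → ℝ} (hf : Continuous f) (x : E) :
    (‖f x‖₊ : ℝ≥0∞) ≤ eLpNormEssSup f μ := by
  by_contra h
  push_neg at h
  have htop : eLpNormEssSup f μ ≠ ⊤ := h.ne_top
  set c : ℝ := (eLpNormEssSup f μ).toReal with hc
  have hcx : c < ‖f x‖ := by
    have h2 := ENNReal.toReal_lt_toReal htop ENNReal.coe_ne_top |>.mpr h
    simpa [hc] using h2
  have hU : IsOpen {y | c < ‖f y‖} := isOpen_lt continuous_const hf.norm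
  have hne : ({y | c < ‖f y‖} : Set E).Nonempty := ⟨x, hcx⟩
  have hpos : 0 < μ {y | c < ‖f y‖} := hU.measure_pos μ hne
  have hae := enorm_ae_le_eLpNormEssSup f μ
  have : μ {y | c < ‖f y‖} = 0 := by
    refine measure_mono_null ?_ (ae_iff.mp hae)
    intro y hy
    simp only [Set.mem_setOf_eq, not_le]
    calc eLpNormEssSup f μ = ENNReal.ofReal c := by rw [hc, ENNReal.ofReal_toReal htop]
    _ < ENNReal.ofReal ‖f y‖ := by exact_mod_cast ENNReal.ofReal_lt_ofReal_iff_of_nonneg (by positivity) |>.mpr hy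
    _ = (‖f y‖₊ : ℝ≥0∞) := by simp [ENNReal.ofReal, Real.toNNReal_eq_nnnorm_of_nonneg (norm_nonneg _), Real.nnabs, Real.nnnorm_abs]; rfl
  exact hpos.ne' this

lemma vol_ball (d : ℕ) {ℓ : ℝ} (hℓ : 0 < ℓ) :
    volume (Metric.ball (0 : EuclideanSpace ℝ (Fin d)) ℓ)
      = ENNReal.ofReal (ℓ ^ (d:ℕ)) * volume (Metric.ball (0 : EuclideanSpace ℝ (Fin d)) 1) := by
  rcases Nat.eq_zero_or_pos d with hd | hd
  · subst hd
    have h1 : (Metric.ball (0 : EuclideanSpace ℝ (Fin 0)) ℓ) = Set.univ := by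
      ext x; simp [Metric.mem_ball, Subsingleton.elim x 0, hℓ]
    have h2 : (Metric.ball (0 : EuclideanSpace ℝ (Fin 0)) 1) = Set.univ := by
      ext x; simp [Metric.mem_ball, Subsingleton.elim x 0]
    simp [h1, h2]
  · have : Nontrivial (EuclideanSpace ℝ (Fin d)) := by
      have : 0 < Module.finrank ℝ (EuclideanSpace ℝ (Fin d)) := by
        simpa [finrank_euclideanSpace_fin] using hd
      exact Module.nontrivial_of_finrank_pos this
    rw [Measure.addHaar_ball _ _ hℓ.le, finrank_euclideanSpace_fin]

lemma holder_step {E : Type*} [MeasurableSpace E] {μ : Measure E} {T : Set E}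
    (hT : MeasurableSet T) {g : E → ℝ≥0∞} (hg : AEMeasurable g μ) {p' : ℝ} (hp' : 1 ≤ p') :
    ∫⁻ y, T.indicator g y ∂μ
      ≤ (μ T) ^ (1 - 1/p') * (∫⁻ y, T.indicator (fun y => g y ^ p') y ∂μ) ^ (1/p') := by
  rcases eq_or_lt_of_le hp' with h1 | h1
  · have heq : T.indicator (fun y => g y ^ p') = T.indicator g := by
      funext y; rw [← h1]; simp [Set.indicator_apply, ENNReal.rpow_one]
    rw [heq, ← h1]
    simp
  · have hpq : Real.HolderConjugate (p'/(p'-1)) p' := (Real.HolderConjugate.conjExponent h1).symm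
    have hq1 : 1 / (p'/(p'-1)) = 1 - 1/p' := by
      have := hpq.inv_add_inv_eq_one
      have hne : p' ≠ 0 := by linarith
      field_simp at this ⊢
    have key := ENNReal.lintegral_mul_le_Lp_mul_Lq μ hpq
      (f := T.indicator (fun _ => 1)) (g := T.indicator g)
      ((measurable_one.indicator hT).aemeasurable) (hg.indicator hT)
    have e1 : ∀ a, (T.indicator (fun _ => (1:ℝ≥0∞)) * T.indicator g) a = T.indicator g a := by
      intro a; by_cases h : a ∈ T <;> simp [Set.indicator_apply, h]
    have e2 : ∀ a, T.indicator (fun _ => (1:ℝ≥0∞)) a ^ (p'/(p'-1)) = T.indicator (fun _ => (1:ℝ≥0∞)) a := by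
      intro a; by_cases h : a ∈ T <;>
        simp [Set.indicator_apply, h, ENNReal.zero_rpow_of_pos hpq.pos]
    have e3 : ∀ a, T.indicator g a ^ p' = T.indicator (fun y => g y ^ p') a := by
      intro a; by_cases h : a ∈ T <;>
        simp [Set.indicator_apply, h, ENNReal.zero_rpow_of_pos hpq.symm.pos]
    simp only [e1, e2, e3] at key
    have e4 : ∫⁻ a, T.indicator (fun _ => (1:ℝ≥0∞)) a ∂μ = μ T := by
      rw [lintegral_indicator hT]; simp
    rwa [e4, hq1] at key

lemma tonelli_ball {d : ℕ} {g : EuclideanSpace ℝ (Fin d) → ℝ≥0∞} (hg : Measurable g) (ℓ : ℝ) :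
    ∫⁻ x, ∫⁻ y, (Metric.ball x ℓ).indicator g y ∂(volume) ∂(volume) = volume (Metric.ball (0:EuclideanSpace ℝ (Fin d)) ℓ) * ∫⁻ y, g y ∂(volume) := by
  have hU : MeasurableSet {p : EuclideanSpace ℝ (Fin d) × EuclideanSpace ℝ (Fin d) | dist p.2 p.1 < ℓ} := by
    exact (isOpen_lt (continuous_dist.comp (continuous_snd.prodMk continuous_fst)) continuous_const).measurableSet
  have hmeas : AEMeasurable (Function.uncurry fun x y => (Metric.ball x ℓ).indicator g y) ((volume : Measure (EuclideanSpace ℝ (Fin d))).prod volume) := by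
    have : (Function.uncurry fun x y => (Metric.ball x ℓ).indicator g y)
        = {p : EuclideanSpace ℝ (Fin d) × EuclideanSpace ℝ (Fin d) | dist p.2 p.1 < ℓ}.indicator (fun p => g p.2) := by
      funext p
      by_cases h : dist p.2 p.1 < ℓ <;>
        simp [Function.uncurry, Set.indicator_apply, Metric.mem_ball, h]
    rw [this]
    exact ((hg.comp measurable_snd).indicator hU).aemeasurable
  rw [lintegral_lintegral_swap hmeas]
  have inner : ∀ y, ∫⁻ x, (Metric.ball x ℓ).indicator g y ∂(volume) = g y * volume (Metric.ball (0:EuclideanSpace ℝ (Fin d)) ℓ) := by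
    intro y
    have : (fun x => (Metric.ball x ℓ).indicator g y)
        = (Metric.ball y ℓ).indicator (fun _ => g y) := by
      funext x
      by_cases h : dist x y < ℓ <;>
        simp [Set.indicator_apply, Metric.mem_ball, dist_comm y x, h]
    rw [this, lintegral_indicator measurableSet_ball, setLIntegral_const,
      Measure.addHaar_ball_center]
  simp_rw [inner]
  rw [lintegral_mul_const' _ _ (measure_ball_lt_top.ne), mul_comm]

lemma schwartz_essSup_lt_top {d : ℕ} (G : SchwartzMap (EuclideanSpace ℝ (Fin d)) ℝ) :
    eLpNormEssSup (⇑G) volume < ⊤ := by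
  obtain ⟨C, hC⟩ := G.decay 0 0
  refine eLpNormEssSup_lt_top_of_ae_bound (C := C) (ae_of_all _ fun x => ?_)
  simpa [norm_iteratedFDeriv_zero] using hC.2 x

lemma pointwise_bound {d : ℕ} (G : SchwartzMap (EuclideanSpace ℝ (Fin d)) ℝ) (ℓ : ℝ)
    (S : Set (EuclideanSpace ℝ (Fin d))) (u : EuclideanSpace ℝ (Fin d) → ℝ)
    (x : EuclideanSpace ℝ (Fin d)) :
    (‖∫ y, (Metric.ball (0 : EuclideanSpace ℝ (Fin d)) ℓ).indicator (⇑G) (x - y) * S.indicator u y‖₊ : ℝ≥0∞)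
      ≤ eLpNormEssSup (⇑G) volume *
        ∫⁻ y, (S ∩ Metric.ball x ℓ).indicator (fun y => (‖u y‖₊ : ℝ≥0∞)) y := by
  set M := eLpNormEssSup (⇑G) volume with hM
  refine le_trans (enorm_integral_le_lintegral_enorm _) ?_
  have hpt : ∀ y, (‖(Metric.ball (0 : EuclideanSpace ℝ (Fin d)) ℓ).indicator (⇑G) (x - y) * S.indicator u y‖₊ : ℝ≥0∞)
      ≤ M * (S ∩ Metric.ball x ℓ).indicator (fun y => (‖u y‖₊ : ℝ≥0∞)) y := by
    intro y
    by_cases hyS : y ∈ S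
    · by_cases hyB : y ∈ Metric.ball x ℓ
      · have h1 : (‖(Metric.ball (0 : EuclideanSpace ℝ (Fin d)) ℓ).indicator (⇑G) (x - y)‖₊ : ℝ≥0∞) ≤ M := by
          by_cases h : (x - y) ∈ Metric.ball (0 : EuclideanSpace ℝ (Fin d)) ℓ
          · rw [Set.indicator_of_mem h]; exact cont_le_essSup G.continuous _
          · rw [Set.indicator_of_notMem h]; simp
        have h2 : (‖S.indicator u y‖₊ : ℝ≥0∞) = (‖u y‖₊ : ℝ≥0∞) := by
          rw [Set.indicator_of_mem hyS]
        rw [nnnorm_mul, ENNReal.coe_mul, Set.indicator_of_mem (Set.mem_inter hyS hyB) (fun y => (‖u y‖₊:ℝ≥0∞)), h2]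
        exact mul_le_mul' h1 le_rfl
      · have : (x - y) ∉ Metric.ball (0 : EuclideanSpace ℝ (Fin d)) ℓ := by
          rw [mem_ball_zero_iff]
          rw [Metric.mem_ball, dist_comm] at hyB
          simpa [dist_eq_norm] using hyB
        rw [Set.indicator_of_notMem this]
        simp
    · rw [Set.indicator_of_notMem hyS]
      simp
  calc ∫⁻ y, (‖(Metric.ball (0 : EuclideanSpace ℝ (Fin d)) ℓ).indicator (⇑G) (x - y) * S.indicator u y‖₊ : ℝ≥0∞)
      ≤ ∫⁻ y, M * (S ∩ Metric.ball x ℓ).indicator (fun y => (‖u y‖₊ : ℝ≥0∞)) y := lintegral_mono hpt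
    _ = M * ∫⁻ y, (S ∩ Metric.ball x ℓ).indicator (fun y => (‖u y‖₊ : ℝ≥0∞)) y := by
        rw [lintegral_const_mul' _ _ (schwartz_essSup_lt_top G).ne]

end Aux

theorem near_field_sparse_estimate :
    ∃ C : ℕ → ℝ, ∀ d : ℕ, 0 < C d ∧
      ∀ (G : SchwartzMap (EuclideanSpace ℝ (Fin d)) ℝ) (p : ℝ≥0∞), 1 ≤ p →
        ∀ (ℓ V : ℝ), 0 < ℓ → 0 ≤ V →
          ∀ S : Set (EuclideanSpace ℝ (Fin d)), MeasurableSet S →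
            (∀ x : EuclideanSpace ℝ (Fin d), volume (S ∩ Metric.ball x ℓ) ≤ ENNReal.ofReal V) →
            ∀ u₀ : EuclideanSpace ℝ (Fin d) → ℝ, MemLp u₀ p volume →
              eLpNorm (fun x => ∫ y,
                  (Metric.ball (0 : EuclideanSpace ℝ (Fin d)) ℓ).indicator (⇑G) (x - y) * S.indicator u₀ y) p volume
                ≤ ENNReal.ofReal (C d * (eLpNorm (⇑G) ⊤ volume).toReal *
                    V ^ (1 - 1 / p.toReal) * ℓ ^ ((d : ℝ) / p.toReal)) * eLpNorm u₀ p volume := by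
  classical
  refine ⟨fun d => max 1 (volume (Metric.ball (0 : EuclideanSpace ℝ (Fin d)) 1)).toReal,
    fun d => ⟨lt_of_lt_of_le one_pos (le_max_left _ _), ?_⟩⟩
  intro G p hp ℓ V hℓ hV S hS hSV u₀ hu₀
  beta_reduce
  set Cd : ℝ := max 1 (volume (Metric.ball (0 : EuclideanSpace ℝ (Fin d)) 1)).toReal with hCd
  have hCd1 : (1:ℝ) ≤ Cd := le_max_left _ _
  -- reduce to strongly measurable u
  set u := hu₀.1.mk u₀ with hu_def
  have hu_sm : StronglyMeasurable u := hu₀.1.stronglyMeasurable_mk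
  have hae : u₀ =ᵐ[volume] u := hu₀.1.ae_eq_mk
  have hLHS : (fun x => ∫ y,
      (Metric.ball (0 : EuclideanSpace ℝ (Fin d)) ℓ).indicator (⇑G) (x - y) * S.indicator u₀ y)
      = fun x => ∫ y,
      (Metric.ball (0 : EuclideanSpace ℝ (Fin d)) ℓ).indicator (⇑G) (x - y) * S.indicator u y := by
    funext x
    refine integral_congr_ae (hae.mono fun y hy => ?_)
    simp only [Set.indicator_apply]
    rw [hy]
  rw [hLHS, eLpNorm_congr_ae hae]
  have hu : MemLp u p volume := hu₀.ae_eq hae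
  have hunorm : Measurable fun y => (‖u y‖₊ : ℝ≥0∞) := hu_sm.measurable.nnnorm.coe_nnreal_ennreal
  set M := eLpNormEssSup (⇑G) volume with hM
  have hMtop : M ≠ ⊤ := (schwartz_essSup_lt_top G).ne
  have hMG : eLpNorm (⇑G) ⊤ volume = M := eLpNorm_exponent_top
  have hMnn : (0:ℝ) ≤ M.toReal := ENNReal.toReal_nonneg
  by_cases hptop : p = ⊤
  · subst hptop
    have hpt : ∀ x, (‖∫ y,
        (Metric.ball (0 : EuclideanSpace ℝ (Fin d)) ℓ).indicator (⇑G) (x - y) * S.indicator u y‖₊ : ℝ≥0∞)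
        ≤ M * (ENNReal.ofReal V * eLpNormEssSup u volume) := by
      intro x
      refine (pointwise_bound G ℓ S u x).trans (mul_le_mul' le_rfl ?_)
      calc ∫⁻ y, (S ∩ Metric.ball x ℓ).indicator (fun y => (‖u y‖₊ : ℝ≥0∞)) y
          ≤ ∫⁻ y, (S ∩ Metric.ball x ℓ).indicator (fun _ => eLpNormEssSup u volume) y := by
            refine lintegral_mono_ae ((enorm_ae_le_eLpNormEssSup u volume).mono fun y hy => ?_)
            by_cases h : y ∈ S ∩ Metric.ball x ℓ <;> simp [Set.indicator_apply, h, (show (‖u y‖₊ : ℝ≥0∞) ≤ _ from hy)]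
        _ = eLpNormEssSup u volume * volume (S ∩ Metric.ball x ℓ) := by
            rw [lintegral_indicator (hS.inter measurableSet_ball), setLIntegral_const]
        _ ≤ ENNReal.ofReal V * eLpNormEssSup u volume := by
            rw [mul_comm]; exact mul_le_mul' (hSV x) le_rfl
    have h1 : eLpNorm (fun x => ∫ y,
        (Metric.ball (0 : EuclideanSpace ℝ (Fin d)) ℓ).indicator (⇑G) (x - y) * S.indicator u y) ⊤ volume
        ≤ M * (ENNReal.ofReal V * eLpNormEssSup u volume) := by
      rw [eLpNorm_exponent_top, eLpNormEssSup]
      exact essSup_le_of_ae_le _ (ae_of_all _ hpt)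
    refine h1.trans ?_
    rw [eLpNorm_exponent_top]
    norm_num
    calc M * (ENNReal.ofReal V * eLpNormEssSup u volume)
        = (ENNReal.ofReal M.toReal * ENNReal.ofReal V) * eLpNormEssSup u volume := by
          rw [ENNReal.ofReal_toReal hMtop, mul_assoc]
      _ ≤ ENNReal.ofReal (Cd * M.toReal * V) * eLpNormEssSup u volume := by
          refine mul_le_mul' ?_ le_rfl
          rw [← ENNReal.ofReal_mul hMnn]
          refine ENNReal.ofReal_le_ofReal ?_
          nlinarith [mul_nonneg hMnn hV]
  · -- finite p
    have hp0 : p ≠ 0 := fun h => by simp [h] at hp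
    set p' := p.toReal with hp'def
    have hp'1 : (1:ℝ) ≤ p' := by
      have := ENNReal.toReal_mono hptop hp
      simpa using this
    have hp'pos : (0:ℝ) < p' := lt_of_lt_of_le one_pos hp'1
    have hinv1 : 1 / p' ≤ 1 := by
      rw [div_le_one hp'pos]; exact hp'1
    have hinvnn : (0:ℝ) ≤ 1 / p' := by positivity
    have hexpnn : (0:ℝ) ≤ 1 - 1/p' := by linarith
    set g2 : EuclideanSpace ℝ (Fin d) → ℝ≥0∞ := S.indicator (fun y => (‖u y‖₊ : ℝ≥0∞) ^ p') with hg2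
    have hg2m : Measurable g2 := (hunorm.pow_const p').indicator hS
    set oV := ENNReal.ofReal V with hoV
    set K := M ^ p' * oV ^ (p' - 1) with hK
    have hKtop : K ≠ ⊤ :=
      ENNReal.mul_ne_top (ENNReal.rpow_ne_top_of_nonneg hp'pos.le hMtop)
        (ENNReal.rpow_ne_top_of_nonneg (by linarith) ENNReal.ofReal_ne_top)
    have hpt : ∀ x, (‖∫ y,
        (Metric.ball (0 : EuclideanSpace ℝ (Fin d)) ℓ).indicator (⇑G) (x - y) * S.indicator u y‖₊ : ℝ≥0∞) ^ p'
        ≤ K * ∫⁻ y, (Metric.ball x ℓ).indicator g2 y := by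
      intro x
      have h2 := holder_step (μ := volume) (T := S ∩ Metric.ball x ℓ) (hS.inter measurableSet_ball) hunorm.aemeasurable hp'1
      have h3 : volume (S ∩ Metric.ball x ℓ) ^ (1 - 1/p') ≤ oV ^ (1 - 1/p') :=
        ENNReal.rpow_le_rpow (hSV x) hexpnn
      have h4 : (‖∫ y,
          (Metric.ball (0 : EuclideanSpace ℝ (Fin d)) ℓ).indicator (⇑G) (x - y) * S.indicator u y‖₊ : ℝ≥0∞)
          ≤ M * (oV ^ (1 - 1/p') *
            (∫⁻ y, (S ∩ Metric.ball x ℓ).indicator (fun y => (‖u y‖₊ : ℝ≥0∞) ^ p') y) ^ (1/p')) := by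
        refine (pointwise_bound G ℓ S u x).trans (mul_le_mul' le_rfl (h2.trans ?_))
        exact mul_le_mul' h3 le_rfl
      have h5 := ENNReal.rpow_le_rpow h4 hp'pos.le
      refine h5.trans (le_of_eq ?_)
      rw [ENNReal.mul_rpow_of_nonneg _ _ hp'pos.le, ENNReal.mul_rpow_of_nonneg _ _ hp'pos.le,
        ← ENNReal.rpow_mul, ← ENNReal.rpow_mul]
      have e1 : (1 - 1/p') * p' = p' - 1 := by field_simp
      have e2 : 1/p' * p' = 1 := by field_simp
      rw [e1, e2, ENNReal.rpow_one]
      have e3 : (S ∩ Metric.ball x ℓ).indicator (fun y => (‖u y‖₊ : ℝ≥0∞) ^ p')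
          = (Metric.ball x ℓ).indicator g2 := by
        rw [hg2, Set.indicator_indicator, Set.inter_comm]
      rw [e3, hK, mul_assoc]
    have key : ∫⁻ x, (‖∫ y,
        (Metric.ball (0 : EuclideanSpace ℝ (Fin d)) ℓ).indicator (⇑G) (x - y) * S.indicator u y‖₊ : ℝ≥0∞) ^ p'
        ≤ K * (volume (Metric.ball (0 : EuclideanSpace ℝ (Fin d)) ℓ) * ∫⁻ y, g2 y) := by
      refine (lintegral_mono hpt).trans (le_of_eq ?_)
      rw [lintegral_const_mul' _ _ hKtop, tonelli_ball hg2m ℓ]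
    set I := ∫⁻ y, (‖u y‖₊ : ℝ≥0∞) ^ p' with hI
    have hg2I : ∫⁻ y, g2 y ≤ I := lintegral_mono fun y => Set.indicator_le_self _ _ y
    have hIeq : eLpNorm u p volume = I ^ (1/p') := by
      rw [eLpNorm_eq_lintegral_rpow_enorm_toReal hp0 hptop]; rfl
    rw [eLpNorm_eq_lintegral_rpow_enorm_toReal hp0 hptop]
    have step1 : (∫⁻ x, (‖∫ y,
        (Metric.ball (0 : EuclideanSpace ℝ (Fin d)) ℓ).indicator (⇑G) (x - y) * S.indicator u y‖₊ : ℝ≥0∞) ^ p') ^ (1/p')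
        ≤ (K * (volume (Metric.ball (0 : EuclideanSpace ℝ (Fin d)) ℓ) * I)) ^ (1/p') := by
      refine ENNReal.rpow_le_rpow (key.trans ?_) hinvnn
      exact mul_le_mul' le_rfl (mul_le_mul' le_rfl hg2I)
    refine step1.trans ?_
    -- expand the constant
    set c : ℝ := (volume (Metric.ball (0 : EuclideanSpace ℝ (Fin d)) 1)).toReal with hc
    have hcnn : (0:ℝ) ≤ c := ENNReal.toReal_nonneg
    have hvol1 : volume (Metric.ball (0 : EuclideanSpace ℝ (Fin d)) 1) = ENNReal.ofReal c := by
      rw [hc, ENNReal.ofReal_toReal measure_ball_lt_top.ne]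
    have hvol : volume (Metric.ball (0 : EuclideanSpace ℝ (Fin d)) ℓ)
        = ENNReal.ofReal (ℓ ^ (d:ℕ)) * ENNReal.ofReal c := by
      rw [vol_ball d hℓ, hvol1]
    have expand : (K * (volume (Metric.ball (0 : EuclideanSpace ℝ (Fin d)) ℓ) * I)) ^ (1/p')
        = (M * (oV ^ (1 - 1/p') * (ENNReal.ofReal ((ℓ ^ (d:ℕ)) ^ (1/p')) * ENNReal.ofReal (c ^ (1/p'))))) * I ^ (1/p') := by
      rw [hvol, hK]
      rw [ENNReal.mul_rpow_of_nonneg _ _ hinvnn, ENNReal.mul_rpow_of_nonneg _ _ hinvnn,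
        ENNReal.mul_rpow_of_nonneg _ _ hinvnn, ENNReal.mul_rpow_of_nonneg _ _ hinvnn,
        ← ENNReal.rpow_mul, ← ENNReal.rpow_mul]
      have e1 : p' * (1/p') = 1 := by field_simp
      have e2 : (p' - 1) * (1/p') = 1 - 1/p' := by field_simp
      rw [e1, e2, ENNReal.rpow_one,
        ← ENNReal.ofReal_rpow_of_nonneg (by positivity) hinvnn,
        ← ENNReal.ofReal_rpow_of_nonneg hcnn hinvnn]
      ring
    rw [expand, hIeq]
    refine mul_le_mul' ?_ le_rfl
    -- now a pure constant comparison
    have hc' : c ^ (1/p') ≤ Cd := by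
      rcases le_or_gt c 1 with h | h
      · exact le_trans (Real.rpow_le_one hcnn h hinvnn) hCd1
      · refine le_trans (Real.rpow_le_rpow_of_exponent_le h.le hinv1) ?_
        rw [Real.rpow_one]
        exact le_max_right 1 c
    have hℓd : (ℓ ^ (d:ℕ) : ℝ) ^ (1/p') = ℓ ^ ((d:ℝ)/p') := by
      rw [← Real.rpow_natCast ℓ d, ← Real.rpow_mul hℓ.le, mul_one_div]
    have hoVe : oV ^ (1 - 1/p') = ENNReal.ofReal (V ^ (1 - 1/p')) := by
      rw [hoV, ENNReal.ofReal_rpow_of_nonneg hV hexpnn]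
    rw [hoVe, hℓd, ← ENNReal.ofReal_toReal hMtop]
    have hcomb : ENNReal.ofReal M.toReal * (ENNReal.ofReal (V ^ (1 - 1/p')) *
        (ENNReal.ofReal (ℓ ^ ((d:ℝ)/p')) * ENNReal.ofReal (c ^ (1/p'))))
        = ENNReal.ofReal ((M.toReal * V ^ (1 - 1/p') * ℓ ^ ((d:ℝ)/p')) * c ^ (1/p')) := by
      rw [ENNReal.ofReal_mul (by positivity), ENNReal.ofReal_mul (by positivity),
        ENNReal.ofReal_mul hMnn]
      ring
    rw [hcomb]
    refine ENNReal.ofReal_le_ofReal ?_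
    calc (M.toReal * V ^ (1 - 1/p') * ℓ ^ ((d:ℝ)/p')) * c ^ (1/p')
        ≤ (M.toReal * V ^ (1 - 1/p') * ℓ ^ ((d:ℝ)/p')) * Cd := by
          refine mul_le_mul_of_nonneg_left hc' ?_
          have h1 : (0:ℝ) ≤ V ^ (1 - 1/p') := Real.rpow_nonneg hV _
          have h2 : (0:ℝ) ≤ ℓ ^ ((d:ℝ)/p') := Real.rpow_nonneg hℓ.le _
          positivity
      _ = Cd * M.toReal * V ^ (1 - 1/p') * ℓ ^ ((d:ℝ)/p') := by ring
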